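/- arXiv:2305.12440 — 5 statements merged into one kernel-verified Lean document; each statement's English description precedes it below -/
import Mathlib

section
/- Let n ≥ 1, and for a ∈ ℤ_n let ā ∈ {0,…,n−1} denote its canonical representative. Define ω : ℤ_n × ℤ_n → ℤ₂ by ω(a,b) = 0 if ā + b̄ < n and ω(a,b) = 1 otherwise, and define α : ℤ_n × ℤ_n × ℤ_n → ℂ* by α(a,b,c) = exp((πi/n)·ω(a,b)·c̄), where ω(a,b) is viewed as the integer 0 or 1. Then (α, ω) is a ℂ*-valued super 3-cocycle on ℤ_n, i.e. α(a,b,c)·α(a,b+c,d)·α(b,c,d) = (−1)^{ω(a,b)·ω(c,d)}·α(a+b,c,d)·α(a,b,c+d) for all a,b,c,d ∈ ℤ_n, where in the exponent ω-values are lifted to integers 0 or 1. -/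
/-- The `ℤ₂`-valued 2-cocycle on `ℤ_n` given by `ω(a,b) = 0` if `ā + b̄ < n`
and `ω(a,b) = 1` otherwise, where `ā` is the canonical representative. -/
def omegaZ (n : ℕ) (a b : ZMod n) : ZMod 2 :=
  if a.val + b.val < n then 0 else 1

/-- The 3-cochain `α(a,b,c) = exp((πi/n)·ω(a,b)·c̄)`, with `ω(a,b)` lifted
to the integer `0` or `1`. Its values lie in `ℂ* = ℂ \ {0}` since `exp` never vanishes. -/
noncomputable def alphaZ (n : ℕ) (a b c : ZMod n) : ℂ :=
  Complex.exp ((Real.pi * Complex.I / n) * ((omegaZ n a b).val : ℂ) * (c.val : ℂ))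

lemma omegaZ_val (n : ℕ) (a b : ZMod n) :
    (omegaZ n a b).val = if a.val + b.val < n then 0 else 1 := by
  simp [omegaZ, apply_ite ZMod.val]
  split <;> rfl

lemma val_add_omega (n : ℕ) (hn : 1 ≤ n) (a b : ZMod n) :
    (a + b).val + n * (omegaZ n a b).val = a.val + b.val := by
  haveI : NeZero n := ⟨by omega⟩
  have h := ZMod.val_add a b
  have ha := ZMod.val_lt a
  have hb := ZMod.val_lt b
  rw [omegaZ_val]
  by_cases hab : a.val + b.val < n
  · simp [hab, h, Nat.mod_eq_of_lt hab]
  · have : (a.val + b.val) % n = a.val + b.val - n := by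
      rw [Nat.mod_eq_sub_mod (by omega), Nat.mod_eq_of_lt (by omega)]
    simp [hab, h, this]
    omega

lemma omega_cocycle (n : ℕ) (hn : 1 ≤ n) (a b c : ZMod n) :
    (omegaZ n a b).val + (omegaZ n (a + b) c).val =
    (omegaZ n b c).val + (omegaZ n a (b + c)).val := by
  have h1 := val_add_omega n hn a b
  have h2 := val_add_omega n hn (a + b) c
  have h3 := val_add_omega n hn b c
  have h4 := val_add_omega n hn a (b + c)
  rw [add_assoc] at h2
  have hn0 : 0 < n := hn
  have key : n * ((omegaZ n a b).val + (omegaZ n (a+b) c).val) =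
      n * ((omegaZ n b c).val + (omegaZ n a (b+c)).val) := by
    rw [Nat.mul_add, Nat.mul_add]
    omega
  exact Nat.eq_of_mul_eq_mul_left hn0 key

/-- `(alphaZ n, omegaZ n)` is a `ℂ*`-valued super 3-cocycle on `ℤ_n`: the
super 3-cocycle equation holds for all `a, b, c, d ∈ ℤ_n`. -/
theorem alphaZ_omegaZ_is_super_three_cocycle (n : ℕ) (hn : 1 ≤ n)
    (a b c d : ZMod n) :
    alphaZ n a b c * alphaZ n a (b + c) d * alphaZ n b c d =
      (-1 : ℂ) ^ ((omegaZ n a b).val * (omegaZ n c d).val) *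
        (alphaZ n (a + b) c d * alphaZ n a b (c + d)) := by
  haveI : NeZero n := ⟨by omega⟩
  have hn0 : (n : ℂ) ≠ 0 := by exact_mod_cast (by omega : n ≠ 0)
  have hco := omega_cocycle n hn a b c
  have hcd := val_add_omega n hn c d
  have hco' : ((omegaZ n a b).val : ℂ) + (omegaZ n (a+b) c).val =
      (omegaZ n b c).val + (omegaZ n a (b+c)).val := by exact_mod_cast hco
  have hcd' : ((c + d).val : ℂ) + n * (omegaZ n c d).val = c.val + d.val := by
    exact_mod_cast hcd
  have hneg : (-1 : ℂ) ^ ((omegaZ n a b).val * (omegaZ n c d).val) =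
      Complex.exp ((((omegaZ n a b).val * (omegaZ n c d).val : ℕ) : ℂ) * (Real.pi * Complex.I)) := by
    rw [Complex.exp_nat_mul, Complex.exp_pi_mul_I]
  rw [hneg]
  unfold alphaZ
  rw [← Complex.exp_add, ← Complex.exp_add, ← Complex.exp_add, ← Complex.exp_add]
  congr 1
  rw [Nat.cast_mul]
  have hu : (n : ℂ) * (n : ℂ)⁻¹ = 1 := mul_inv_cancel₀ hn0
  linear_combination (-(Real.pi * Complex.I * (n : ℂ)⁻¹ * (d.val : ℂ))) * hco' -
    (Real.pi * Complex.I * (n : ℂ)⁻¹ * ((omegaZ n a b).val : ℂ)) * hcd' +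
    (Real.pi * Complex.I * ((omegaZ n a b).val : ℂ) * ((omegaZ n c d).val : ℂ)) * hu
end

section
/- Let G be a group, K a field, and (α, ω) a K*-valued super 3-cocycle on G, with 1 denoting the identity element of G. Then for every g ∈ G, α(1,g,1)·α(1,1,g)·α(g,1,1) = (−1)^{ω(g,g⁻¹)·ω(1,1) + ω(g,1)·ω(1,1)} · α(1,g,1)⁻¹ · α(1,g,g⁻¹)⁻¹ · α(g,1,1), where ω-values are lifted to the integers 0 or 1 in the exponent. -/
/-- The spin CP-move identity: for a `K*`-valued super 3-cocycle `(α, ω)` on a group `G`,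
`α(1,g,1)·α(1,1,g)·α(g,1,1)
  = (−1)^{ω(g,g⁻¹)·ω(1,1) + ω(g,1)·ω(1,1)} · α(1,g,1)⁻¹ · α(1,g,g⁻¹)⁻¹ · α(g,1,1)`. -/
theorem spin_CP_move_identity {G : Type*} [Group G] {K : Type*} [Field K]
    (α : G → G → G → Kˣ) (ω : G → G → ZMod 2)
    (hω : ∀ g h k : G, ω g h + ω (g * h) k = ω h k + ω g (h * k))
    (hα : ∀ g h k l : G,
      α g h k * α g (h * k) l * α h k l =
        (-1 : Kˣ) ^ ((ω g h).val * (ω k l).val) * (α (g * h) k l * α g h (k * l)))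
    (g : G) :
    α 1 g 1 * α 1 1 g * α g 1 1 =
      (-1 : Kˣ) ^ ((ω g g⁻¹).val * (ω 1 1).val + (ω g 1).val * (ω 1 1).val) *
        ((α 1 g 1)⁻¹ * (α 1 g g⁻¹)⁻¹ * α g 1 1) := by
  have key : ∀ n : ℕ, ((-1 : Kˣ) ^ n)⁻¹ = (-1) ^ n := fun n =>
    inv_eq_of_mul_eq_one_left (by rw [← pow_add, ← two_mul, pow_mul, neg_one_sq, one_pow])
  have e1 : α 1 1 1 = (-1 : Kˣ) ^ ((ω g 1).val * (ω 1 1).val) := by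
    have h := hα g 1 1 1
    simp only [one_mul, mul_one] at h
    exact mul_left_cancel (h.trans (mul_comm _ _))
  have e2 : α 1 g 1 = (-1 : Kˣ) ^ ((ω 1 g).val * (ω 1 1).val) := by
    have h := hα 1 g 1 1
    simp only [one_mul, mul_one] at h
    rw [mul_assoc, mul_comm (α 1 g 1) (α g 1 1)] at h
    exact mul_right_cancel h
  have e4 : α 1 1 g * α 1 g g⁻¹ =
      (-1 : Kˣ) ^ ((ω 1 1).val * (ω g g⁻¹).val) * α 1 1 1 := by
    have h := hα 1 1 g g⁻¹
    simp only [one_mul, mul_one, mul_inv_cancel] at h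
    rw [mul_comm (α 1 g g⁻¹) (α 1 1 1), ← mul_assoc] at h
    exact mul_right_cancel h
  have e5 : α 1 1 g =
      (-1 : Kˣ) ^ ((ω g g⁻¹).val * (ω 1 1).val + (ω g 1).val * (ω 1 1).val) *
        (α 1 g g⁻¹)⁻¹ := by
    rw [eq_mul_inv_iff_mul_eq, e4, e1, ← pow_add]
    congr 1
    ring
  rw [e2, key, e5]
  ac_rfl
end

section
/- Let ω : ℤ₂ × ℤ₂ → ℤ₂ be defined on canonical representatives ā, b̄ ∈ {0,1} by ω(a,b) = 0 if ā + b̄ < 2 and ω(a,b) = 1 otherwise, and let α : ℤ₂ × ℤ₂ × ℤ₂ → ℂ* be α(a,b,c) = exp((πi/2)·ω(a,b)·c̄), with ω-values lifted to the integers 0 or 1. Then ∑_{g ∈ ℤ₂} (−1)^{ω(g,g) + ω(g,0)} · α(g,0,g) · α(g,g,g) = 1 − i, where 0 is the identity of ℤ₂ and i is the imaginary unit in ℂ. -/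
/-- The `ℤ₂`-valued 2-cocycle on `ℤ₂` given by `ω(a,b) = 0` if `ā + b̄ < 2`
and `ω(a,b) = 1` otherwise, where `ā ∈ {0,1}` is the canonical representative. -/
def omega2 (a b : ZMod 2) : ZMod 2 :=
  if a.val + b.val < 2 then 0 else 1

/-- The 3-cochain `α(a,b,c) = exp((πi/2)·ω(a,b)·c̄)`, with `ω(a,b)` lifted
to the integer `0` or `1`. -/
noncomputable def alpha2 (a b c : ZMod 2) : ℂ :=
  Complex.exp ((Real.pi * Complex.I / 2) * ((omega2 a b).val : ℂ) * (c.val : ℂ))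

lemma exp_pi_I_div_two : Complex.exp (Real.pi * Complex.I / 2) = Complex.I := by
  have : (Real.pi : ℂ) * Complex.I / 2 = (Real.pi / 2 : ℝ) * Complex.I := by
    push_cast; ring
  rw [this, Complex.exp_mul_I]
  simp [Complex.cos_pi_div_two, Complex.sin_pi_div_two]

/-- The state-sum invariant of the lens space `L(2,1)` with its first spin
structure `s₁` equals `1 − i`. -/
theorem Z_L21_s1 :
    ∑ g : ZMod 2,
      (-1 : ℂ) ^ ((omega2 g g).val + (omega2 g 0).val) * (alpha2 g 0 g * alpha2 g g g) =
      1 - Complex.I := by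
  have h : (Finset.univ : Finset (ZMod 2)) = {0, 1} := by decide
  rw [h, Finset.sum_insert (by decide), Finset.sum_singleton]
  have h00 : omega2 0 0 = 0 := by decide
  have h11 : omega2 1 1 = 1 := by decide
  have h10 : omega2 1 0 = 0 := by decide
  have hv0 : (0 : ZMod 2).val = 0 := rfl
  have hv1 : (1 : ZMod 2).val = 1 := rfl
  simp only [alpha2, h00, h11, h10, hv0, hv1]
  push_cast
  rw [show (↑Real.pi * Complex.I / 2 * 0 * 1 : ℂ) = 0 by ring,
    show (↑Real.pi * Complex.I / 2 * 1 * 1 : ℂ) = ↑Real.pi * Complex.I / 2 by ring,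
    Complex.exp_zero, exp_pi_I_div_two]
  ring_nf
  rw [Complex.exp_zero]
  ring
end

section
/- Let ω : ℤ₂ × ℤ₂ → ℤ₂ be defined on canonical representatives ā, b̄ ∈ {0,1} by ω(a,b) = 0 if ā + b̄ < 2 and ω(a,b) = 1 otherwise, and let α : ℤ₂ × ℤ₂ × ℤ₂ → ℂ* be α(a,b,c) = exp((πi/2)·ω(a,b)·c̄), with ω-values lifted to the integers 0 or 1. Then ∑_{g ∈ ℤ₂} α(g,0,g) · α(g,g,g) = 1 + i, where 0 is the identity of ℤ₂ and i is the imaginary unit in ℂ. -/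
/-- The state-sum invariant of the lens space `L(2,1)` with its second spin
structure `s₂` equals `1 + i`. -/
theorem Z_L21_s2 :
    ∑ g : ZMod 2, alpha2 g 0 g * alpha2 g g g = 1 + Complex.I := by
  rw [show (Finset.univ : Finset (ZMod 2)) = {0, 1} by decide]
  rw [Finset.sum_insert (by decide), Finset.sum_singleton]
  have e1 : omega2 0 0 = 0 := by decide
  have e2 : omega2 1 0 = 0 := by decide
  have e3 : omega2 1 1 = 1 := by decide
  have v0 : (0 : ZMod 2).val = 0 := by decide
  have v1 : (1 : ZMod 2).val = 1 := by decide
  simp only [alpha2, e1, e2, e3, v0, v1, Nat.cast_zero, Nat.cast_one, mul_zero, zero_mul,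
    mul_one, Complex.exp_zero, one_mul]
  rw [show (Real.pi : ℂ) * Complex.I / 2 = (Real.pi/2 : ℝ) * Complex.I by push_cast; ring,
    Complex.exp_mul_I]
  norm_num
end

section
/- Let ω : ℤ₂ × ℤ₂ → ℤ₂ be defined on canonical representatives ā, b̄ ∈ {0,1} by ω(a,b) = 0 if ā + b̄ < 2 and ω(a,b) = 1 otherwise, and let α : ℤ₂ × ℤ₂ × ℤ₂ → ℂ* be α(a,b,c) = exp((πi/2)·ω(a,b)·c̄), with ω-values lifted to the integers 0 or 1. Then ∑_{g ∈ ℤ₂} (−1)^{ω(g,g) + ω(g,0)} · α(g,0,g) · α(g,g,g) ≠ ∑_{g ∈ ℤ₂} α(g,0,g) · α(g,g,g), i.e. the state sums associated to the two spin structures of L(2,1) take distinct values. -/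
/-- The state sums associated to the two spin structures of `L(2,1)` take
distinct values: the invariant is sensitive to the spin structure. -/
theorem Z_L21_spin_sensitive :
    ∑ g : ZMod 2,
      (-1 : ℂ) ^ ((omega2 g g).val + (omega2 g 0).val) * (alpha2 g 0 g * alpha2 g g g) ≠
    ∑ g : ZMod 2, alpha2 g 0 g * alpha2 g g g := by
  have hI : Complex.exp (Real.pi * Complex.I / 2 * 1 * 1) = Complex.I := by
    have h : (Real.pi * Complex.I / 2 * 1 * 1) = (Real.pi / 2 : ℝ) * Complex.I := by
      push_cast; ring
    rw [h, Complex.exp_mul_I]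
    simp
  rw [show (Finset.univ : Finset (ZMod 2)) = {0, 1} from by decide,
    Finset.sum_pair (by decide : (0:ZMod 2) ≠ 1), Finset.sum_pair (by decide : (0:ZMod 2) ≠ 1)]
  have o00 : omega2 0 0 = 0 := by decide
  have o10 : omega2 1 0 = 0 := by decide
  have o11 : omega2 1 1 = 1 := by decide
  simp only [alpha2, o00, o10, o11]
  norm_num [hI]
  norm_num [ZMod.val_one]
end
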